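/- For every real η > 0, the exponential integral satisfies ∫_η^∞ (e^{-t}/t) dt < e^{-η} · log(1 + 1/η). -/

import Mathlib

open MeasureTheory Set Filter

lemma aux_hasDerivAt (t : ℝ) (ht : 0 < t) :
    HasDerivAt (fun t => -(Real.exp (-t) * Real.log (1 + 1/t)))
      (Real.exp (-t) * Real.log (1 + 1/t) + Real.exp (-t) / (t*(t+1))) t := by
  have ht' : t ≠ 0 := ne_of_gt ht
  have h1 : (0:ℝ) < 1 + 1/t := by positivity
  have hexp : HasDerivAt (fun t : ℝ => Real.exp (-t)) (-Real.exp (-t)) t := by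
    simpa [Function.comp_def] using (Real.hasDerivAt_exp (-t)).comp t (hasDerivAt_neg t)
  have hinner : HasDerivAt (fun t : ℝ => 1 + 1/t) (-(t^2)⁻¹) t := by
    simpa [one_div] using ((hasDerivAt_inv ht').const_add 1)
  have hlog : HasDerivAt (fun t : ℝ => Real.log (1 + 1/t)) ((1 + 1/t)⁻¹ * (-(t^2)⁻¹)) t := by
    simpa [Function.comp_def] using (Real.hasDerivAt_log (ne_of_gt h1)).comp t hinner
  have := (hexp.mul hlog).neg
  convert this using 1 <;> try rfl
  have ht1 : t + 1 ≠ 0 := by positivity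
  field_simp
  ring

lemma aux_log_gt (t : ℝ) (ht : 0 < t) : 1/(t+1) < Real.log (1 + 1/t) := by
  have ht1 : (0:ℝ) < t + 1 := by linarith
  have hy : (0:ℝ) < 1 + 1/t := by positivity
  have hz : (0:ℝ) < (1 + 1/t)⁻¹ := by positivity
  have hne : (1 + 1/t)⁻¹ ≠ 1 := by
    have : (1:ℝ) < 1 + 1/t := by
      have : (0:ℝ) < 1/t := by positivity
      linarith
    intro h
    have := inv_lt_one_of_one_lt₀ this
    rw [h] at this; exact lt_irrefl 1 this
  have := Real.log_lt_sub_one_of_pos hz hne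
  rw [Real.log_inv] at this
  have h2 : Real.log (1 + 1/t) > 1 - (1 + 1/t)⁻¹ := by linarith
  have h3 : 1 - (1 + 1/t)⁻¹ = 1/(t+1) := by
    rw [eq_div_iff (ne_of_gt ht1)]
    field_simp
    ring
  linarith [h3 ▸ h2]

/-- For every real `η > 0`, the exponential integral satisfies
`∫_η^∞ e^{-t}/t dt < e^{-η} log (1 + 1/η)`. -/
theorem exponential_integral_lt (η : ℝ) (hη : 0 < η) :
    ∫ t in Set.Ioi η, Real.exp (-t) / t < Real.exp (-η) * Real.log (1 + 1 / η) := by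
  set f : ℝ → ℝ := fun t => Real.exp (-t) * Real.log (1 + 1/t) + Real.exp (-t) / (t*(t+1))
    with hf_def
  set g : ℝ → ℝ := fun t => Real.exp (-t) / t with hg_def
  -- integrability of the dominating function
  have hexpint : IntegrableOn (fun t : ℝ => Real.exp (-t)) (Ioi η) := by
    simpa using exp_neg_integrableOn_Ioi η one_pos
  -- continuity on Ioi η hence measurability
  have hcontf : ContinuousOn f (Ioi η) := by
    apply ContinuousOn.add
    · apply ContinuousOn.mul
      · exact (Real.continuous_exp.comp continuous_neg).continuousOn
      · apply ContinuousOn.log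
        · exact continuousOn_const.add (continuousOn_const.div continuousOn_id
            (fun x hx => ne_of_gt (hη.trans hx)))
        · intro x hx
          have : (0:ℝ) < x := hη.trans hx
          positivity
    · apply ContinuousOn.div
      · exact (Real.continuous_exp.comp continuous_neg).continuousOn
      · exact continuousOn_id.mul (continuousOn_id.add continuousOn_const)
      · intro x hx
        have : (0:ℝ) < x := hη.trans hx
        positivity
  have hcontg : ContinuousOn g (Ioi η) := by
    apply ContinuousOn.div
    · exact (Real.continuous_exp.comp continuous_neg).continuousOn
    · exact continuousOn_id
    · exact fun x hx => ne_of_gt (hη.trans hx)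
  -- bounds
  have hboundf : ∀ x ∈ Ioi η, ‖f x‖ ≤ (1/η + 1/(η*η)) * Real.exp (-x) := by
    intro x hx
    have hx0 : (0:ℝ) < x := hη.trans hx
    have hlogle : Real.log (1 + 1/x) ≤ 1/x := by
      have := Real.log_le_sub_one_of_pos (show (0:ℝ) < 1 + 1/x by positivity)
      linarith
    have hlogpos : 0 ≤ Real.log (1 + 1/x) := Real.log_nonneg (by
      have : (0:ℝ) ≤ 1/x := by positivity
      linarith)
    have h1 : Real.exp (-x) * Real.log (1 + 1/x) ≤ Real.exp (-x) * (1/η) := by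
      apply mul_le_mul_of_nonneg_left _ (Real.exp_pos _).le
      calc Real.log (1 + 1/x) ≤ 1/x := hlogle
        _ ≤ 1/η := by apply one_div_le_one_div_of_le hη (le_of_lt hx)
    have h2 : Real.exp (-x) / (x*(x+1)) ≤ Real.exp (-x) * (1/(η*η)) := by
      rw [div_eq_mul_inv]
      apply mul_le_mul_of_nonneg_left _ (Real.exp_pos _).le
      rw [← one_div]
      apply one_div_le_one_div_of_le (by positivity)
      have : η ≤ x := le_of_lt hx
      nlinarith
    have hfnn : 0 ≤ f x := by
      have : 0 ≤ Real.exp (-x) / (x*(x+1)) := by positivity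
      have := mul_nonneg (Real.exp_pos (-x)).le hlogpos
      simp only [hf_def]; linarith
    rw [Real.norm_eq_abs, abs_of_nonneg hfnn]
    simp only [hf_def]
    nlinarith [Real.exp_pos (-x)]
  have hboundg : ∀ x ∈ Ioi η, ‖g x‖ ≤ (1/η) * Real.exp (-x) := by
    intro x hx
    have hx0 : (0:ℝ) < x := hη.trans hx
    have hgnn : 0 ≤ g x := by simp only [hg_def]; positivity
    rw [Real.norm_eq_abs, abs_of_nonneg hgnn]
    simp only [hg_def, div_eq_mul_inv]
    rw [mul_comm]
    apply mul_le_mul_of_nonneg_right _ (Real.exp_pos _).le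
    rw [← one_div]
    exact one_div_le_one_div_of_le hη (le_of_lt hx)
  have hintf : IntegrableOn f (Ioi η) := by
    apply Integrable.mono' ((hexpint.const_mul (1/η + 1/(η*η))))
      (hcontf.aestronglyMeasurable measurableSet_Ioi)
    exact (ae_restrict_iff' measurableSet_Ioi).2 (ae_of_all _ hboundf)
  have hintg : IntegrableOn g (Ioi η) := by
    apply Integrable.mono' (hexpint.const_mul (1/η))
      (hcontg.aestronglyMeasurable measurableSet_Ioi)
    exact (ae_restrict_iff' measurableSet_Ioi).2 (ae_of_all _ hboundg)
  -- FTC: ∫ f = e^{-η} log(1+1/η)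
  have hderiv : ∀ x ∈ Ici η, HasDerivAt (fun t => -(Real.exp (-t) * Real.log (1 + 1/t)))
      (f x) x := fun x hx => aux_hasDerivAt x (lt_of_lt_of_le hη hx)
  have htends : Tendsto (fun t => -(Real.exp (-t) * Real.log (1 + 1/t))) atTop (nhds 0) := by
    have h1 : Tendsto (fun t : ℝ => Real.exp (-t)) atTop (nhds 0) :=
      Real.tendsto_exp_neg_atTop_nhds_zero
    have h2 : Tendsto (fun t : ℝ => Real.log (1 + 1/t)) atTop (nhds 0) := by
      have hb : Tendsto (fun t : ℝ => 1 + 1/t) atTop (nhds 1) := by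
        simpa [one_div] using (tendsto_const_nhds.add (tendsto_inv_atTop_zero (𝕜 := ℝ)))
      have := ((Real.continuousAt_log one_ne_zero).tendsto).comp hb
      simpa [Function.comp_def, Real.log_one] using this
    simpa using (h1.mul h2).neg
  have hFTC : ∫ x in Ioi η, f x = Real.exp (-η) * Real.log (1 + 1/η) := by
    have := integral_Ioi_of_hasDerivAt_of_tendsto' hderiv hintf htends
    simpa using this
  -- strict inequality via positivity of f - g
  have hsub : ∀ x ∈ Ioi η, 0 < f x - g x := by
    intro x hx
    have hx0 : (0:ℝ) < x := hη.trans hx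
    have key := aux_log_gt x hx0
    have hexp := Real.exp_pos (-x)
    have h1 : g x = Real.exp (-x) * (1/x) := by simp [hg_def, div_eq_mul_inv]
    have h2 : (1:ℝ)/x - 1/(x*(x+1)) = 1/(x+1) := by
      field_simp
      ring
    have : f x - g x = Real.exp (-x) * (Real.log (1 + 1/x) - 1/(x+1)) := by
      simp only [hf_def, hg_def]
      field_simp
      ring
    rw [this]
    apply mul_pos hexp
    linarith
  have hpos : 0 < ∫ x in Ioi η, (f x - g x) := by
    rw [setIntegral_pos_iff_support_of_nonneg_ae]
    · refine lt_of_lt_of_le ?_ (measure_mono (fun x hx =>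
        (⟨ne_of_gt (hsub x hx), hx⟩ : x ∈ Function.support (fun x => f x - g x) ∩ Ioi η)))
      simp [Real.volume_Ioi]
    · exact (ae_restrict_iff' measurableSet_Ioi).2 (ae_of_all _ (fun x hx => (hsub x hx).le))
    · exact hintf.sub hintg
  have : ∫ x in Ioi η, g x < ∫ x in Ioi η, f x := by
    have := integral_sub hintf hintg
    rw [this] at hpos
    linarith
  calc ∫ t in Ioi η, Real.exp (-t) / t = ∫ x in Ioi η, g x := rfl
    _ < ∫ x in Ioi η, f x := this
    _ = Real.exp (-η) * Real.log (1 + 1/η) := hFTC
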